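/- Let M be a log-convex sequence of positive reals with M_0 = 1 that satisfies (genmg) for some a ∈ ℕ_{>0}. Then any log-convex sequence N of positive reals with N_0 = 1 that is equivalent to M satisfies (genmg) for 2a. In particular, condition (genmg) (for some d) is preserved under equivalence of normalized log-convex sequences. -/
import Mathlib


open Real Filter Set

noncomputable section

/-- The class `LC` of normalized log-convex sequences with `(M_p)^{1/p} → ∞`. -/
def IsLC (M : ℕ → ℝ) : Prop :=
  (∀ p, 0 < M p) ∧ M 0 = 1 ∧ 1 ≤ M 1 ∧
  (∀ p : ℕ, 1 ≤ p → (M p) ^ 2 ≤ M (p - 1) * M (p + 1)) ∧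
  Filter.Tendsto (fun p : ℕ => (M p) ^ ((p : ℝ)⁻¹)) Filter.atTop Filter.atTop

/-- The sequence of quotients `μ_0 = 1`, `μ_p = M_p / M_{p-1}`. -/
def seqQuot (M : ℕ → ℝ) (p : ℕ) : ℝ :=
  if p = 0 then 1 else M p / M (p - 1)

/-- The associated weight function `ω_M(t) = sup_p log(t^p / M_p)`. -/
def omegaM (M : ℕ → ℝ) (t : ℝ) : ℝ :=
  ⨆ p : ℕ, Real.log (t ^ p / M p)

/-- The auxiliary sequence `M̃^a_p = (M_{ap})^{1/a}`. -/
def tildeSeq (M : ℕ → ℝ) (a : ℕ) (p : ℕ) : ℝ :=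
  (M (a * p)) ^ ((a : ℝ)⁻¹)

/-- Condition (genmg) for the parameter `d`. -/
def genMG (M : ℕ → ℝ) (d : ℕ) : Prop :=
  ∃ A : ℝ, 1 ≤ A ∧ ∀ p : ℕ, 1 ≤ p →
    seqQuot M p ≤ A * (M (d * p)) ^ (((d : ℝ) * (p : ℝ))⁻¹)

/-- The moderate growth index `g(M) ∈ ℕ ∪ {+∞}`. -/
def gIndex (M : ℕ → ℝ) : ℕ∞ :=
  sInf {e : ℕ∞ | ∃ n : ℕ, 0 < n ∧ genMG M n ∧ e = (n : ℕ∞)}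

/-- The relation `M ≼ N`, i.e. `sup_{p ≥ 1} (M_p/N_p)^{1/p} < ∞`. -/
def Preceq (M N : ℕ → ℝ) : Prop :=
  ∃ C : ℝ, ∀ p : ℕ, 1 ≤ p → (M p / N p) ^ ((p : ℝ)⁻¹) ≤ C

/-- The class `W₀` of normalized weight functions. -/
def IsW0 (ω : ℝ → ℝ) : Prop :=
  ContinuousOn ω (Set.Ici 0) ∧
  MonotoneOn ω (Set.Ici 0) ∧
  (∀ t ∈ Set.Icc (0 : ℝ) 1, ω t = 0) ∧
  Filter.Tendsto ω Filter.atTop Filter.atTop ∧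
  (fun t => Real.log t) =o[Filter.atTop] ω ∧
  ConvexOn ℝ Set.univ (fun t => ω (Real.exp t))

/-- The Legendre–Fenchel–Young conjugate `φ*_ω(x) = sup{xy − ω(e^y) : y ≥ 0}`. -/
def phiStar (ω : ℝ → ℝ) (x : ℝ) : ℝ :=
  sSup {z : ℝ | ∃ y : ℝ, 0 ≤ y ∧ z = x * y - ω (Real.exp y)}

/-- The associated weight matrix `W^(ℓ)_p = exp(φ*_ω(ℓp)/ℓ)`. -/
def Wmat (ω : ℝ → ℝ) (l : ℝ) (p : ℕ) : ℝ :=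
  Real.exp (phiStar ω (l * p) / l)

/-- Condition `(ω₆)`. -/
def Omega6 (ω : ℝ → ℝ) : Prop :=
  ∃ H : ℝ, 1 ≤ H ∧ ∀ t : ℝ, 0 ≤ t → 2 * ω t ≤ ω (H * t) + H

/-- The counting function `Σ_M(t) = #{p ≥ 1 : μ_p ≤ t}`. -/
def SigmaM (M : ℕ → ℝ) (t : ℝ) : ℕ :=
  Set.ncard {p : ℕ | 1 ≤ p ∧ seqQuot M p ≤ t}

end
lemma seqQuot_succ (M : ℕ → ℝ) (n : ℕ) : seqQuot M (n + 1) = M (n + 1) / M n := by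
  simp [seqQuot]

lemma seqQuot_pos (M : ℕ → ℝ) (hM : ∀ p, 0 < M p) (p : ℕ) : 0 < seqQuot M p := by
  cases p with
  | zero => simp [seqQuot]
  | succ n => rw [seqQuot_succ]; exact div_pos (hM _) (hM _)

lemma quot_step (M : ℕ → ℝ) (hM : ∀ p, 0 < M p)
    (hlc : ∀ p : ℕ, 1 ≤ p → (M p) ^ 2 ≤ M (p - 1) * M (p + 1)) (n : ℕ) :
    seqQuot M (n + 1) ≤ seqQuot M (n + 2) := by
  have h := hlc (n + 1) (by omega)
  simp only [Nat.add_sub_cancel] at h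
  rw [seqQuot_succ, seqQuot_succ]
  rw [div_le_div_iff₀ (hM n) (hM (n + 1))]
  nlinarith [h]

lemma quot_mono (M : ℕ → ℝ) (hM : ∀ p, 0 < M p)
    (hlc : ∀ p : ℕ, 1 ≤ p → (M p) ^ 2 ≤ M (p - 1) * M (p + 1)) {p q : ℕ}
    (hp : 1 ≤ p) (hpq : p ≤ q) : seqQuot M p ≤ seqQuot M q := by
  induction q, hpq using Nat.le_induction with
  | base => exact le_refl _
  | succ n hn ih =>
    refine ih.trans ?_
    obtain ⟨m, rfl⟩ : ∃ m, n = m + 1 := ⟨n - 1, by omega⟩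
    exact quot_step M hM hlc m

lemma lower_bound (N : ℕ → ℝ) (hN : ∀ p, 0 < N p)
    (hlc : ∀ p : ℕ, 1 ≤ p → (N p) ^ 2 ≤ N (p - 1) * N (p + 1)) {p : ℕ}
    (hp : 1 ≤ p) (k : ℕ) : N p * (seqQuot N p) ^ k ≤ N (p + k) := by
  induction k with
  | zero => simp
  | succ k ih =>
    have hmono : seqQuot N p ≤ seqQuot N (p + k + 1) :=
      quot_mono N hN hlc hp (by omega)
    have heq : N (p + k) * seqQuot N (p + k + 1) = N (p + k + 1) := by
      rw [seqQuot_succ, mul_comm, div_mul_cancel₀ _ (hN (p + k)).ne']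
    calc N p * seqQuot N p ^ (k + 1)
        = (N p * seqQuot N p ^ k) * seqQuot N p := by ring
      _ ≤ N (p + k) * seqQuot N (p + k + 1) :=
          mul_le_mul ih hmono (seqQuot_pos N hN p).le (hN _).le
      _ = N (p + (k + 1)) := heq

lemma upper_bound (M : ℕ → ℝ) (hM : ∀ p, 0 < M p)
    (hlc : ∀ p : ℕ, 1 ≤ p → (M p) ^ 2 ≤ M (p - 1) * M (p + 1)) {p : ℕ}
    (hp : 1 ≤ p) (k : ℕ) : M (p + k) ≤ M p * (seqQuot M (p + k)) ^ k := by
  induction k with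
  | zero => simp
  | succ k ih =>
    have hmono : seqQuot M (p + k) ≤ seqQuot M (p + k + 1) :=
      quot_mono M hM hlc (by omega) (by omega)
    have heq : M (p + k) * seqQuot M (p + k + 1) = M (p + k + 1) := by
      rw [seqQuot_succ, mul_comm, div_mul_cancel₀ _ (hM (p + k)).ne']
    have hpow : seqQuot M (p + k) ^ k ≤ seqQuot M (p + k + 1) ^ k :=
      pow_le_pow_left₀ (seqQuot_pos M hM (p + k)).le hmono k
    calc M (p + (k + 1)) = M (p + k) * seqQuot M (p + k + 1) := heq.symm
      _ ≤ (M p * seqQuot M (p + k) ^ k) * seqQuot M (p + k + 1) :=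
          mul_le_mul_of_nonneg_right ih (seqQuot_pos M hM _).le
      _ ≤ (M p * seqQuot M (p + k + 1) ^ k) * seqQuot M (p + k + 1) :=
          mul_le_mul_of_nonneg_right
            (mul_le_mul_of_nonneg_left hpow (hM p).le)
            (seqQuot_pos M hM (p + k + 1)).le
      _ = M p * seqQuot M (p + k + 1) ^ (k + 1) := by ring

theorem stmt6 (M N : ℕ → ℝ) (hMpos : ∀ p, 0 < M p) (hNpos : ∀ p, 0 < N p)
    (hM0 : M 0 = 1) (hN0 : N 0 = 1)
    (hMlc : ∀ p : ℕ, 1 ≤ p → (M p) ^ 2 ≤ M (p - 1) * M (p + 1))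
    (hNlc : ∀ p : ℕ, 1 ≤ p → (N p) ^ 2 ≤ N (p - 1) * N (p + 1))
    (a : ℕ) (ha : 0 < a) (hgen : genMG M a)
    (hMN : Preceq M N) (hNM : Preceq N M) :
    genMG N (2 * a) := by
  obtain ⟨A, hA1, hA⟩ := hgen
  obtain ⟨C1, hC1⟩ := hMN
  obtain ⟨C2, hC2⟩ := hNM
  set C : ℝ := max 1 (max C1 C2) with hCdef
  have hC : (1 : ℝ) ≤ C := le_max_left _ _
  have hCpos : (0 : ℝ) < C := lt_of_lt_of_le one_pos hC
  -- From the preceq bounds, deduce P p ≤ C^p * Q p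
  have key : ∀ (P Q : ℕ → ℝ), (∀ p, 0 < P p) → (∀ p, 0 < Q p) →
      (∀ p : ℕ, 1 ≤ p → (P p / Q p) ^ ((p : ℝ)⁻¹) ≤ C) →
      ∀ p : ℕ, 1 ≤ p → P p ≤ C ^ p * Q p := by
    intro P Q hP hQ h p hp
    have hx : 0 < P p / Q p := div_pos (hP p) (hQ p)
    have h1 := pow_le_pow_left₀ (Real.rpow_nonneg hx.le _) (h p hp) p
    rw [← Real.rpow_natCast ((P p / Q p) ^ ((p : ℝ)⁻¹)) p, ← Real.rpow_mul hx.le,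
      inv_mul_cancel₀ (by exact_mod_cast hp.trans_lt' zero_lt_one |>.ne' :
        ((p : ℝ) ≠ 0)), Real.rpow_one, div_le_iff₀ (hQ p)] at h1
    linarith [h1]
  have hMNle : ∀ p : ℕ, 1 ≤ p → M p ≤ C ^ p * N p := by
    refine key M N hMpos hNpos fun p hp => (hC1 p hp).trans ?_
    exact le_trans (le_max_left C1 C2) (le_max_right _ _)
  have hNMle : ∀ p : ℕ, 1 ≤ p → N p ≤ C ^ p * M p := by
    refine key N M hNpos hMpos fun p hp => (hC2 p hp).trans ?_
    exact le_trans (le_max_right C1 C2) (le_max_right _ _)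
  refine ⟨A * C ^ 4, ?_, ?_⟩
  · have h4 : (1 : ℝ) ≤ C ^ 4 := one_le_pow₀ hC
    nlinarith
  intro p hp
  have h2p : 1 ≤ 2 * p := by omega
  -- Step 1 : seqQuot N p ≤ C^3 * seqQuot M (2*p)
  have hl : N p * (seqQuot N p) ^ p ≤ N (2 * p) := by
    have := lower_bound N hNpos hNlc hp p
    rwa [two_mul]
  have hu : M (2 * p) ≤ M p * (seqQuot M (2 * p)) ^ p := by
    have := upper_bound M hMpos hMlc hp p
    rwa [two_mul]
  have c1 : N (2 * p) ≤ C ^ (2 * p) * M (2 * p) := hNMle _ h2p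
  have c2 : M p ≤ C ^ p * N p := hMNle p hp
  have hμpos := seqQuot_pos M hMpos (2 * p)
  have hνpos := seqQuot_pos N hNpos p
  have hNp := hNpos p
  have hstep1 : seqQuot N p ≤ C ^ 3 * seqQuot M (2 * p) := by
    rw [← pow_le_pow_iff_left₀ hνpos.le (by positivity) (by omega : p ≠ 0)]
    have chain : N p * (seqQuot N p) ^ p ≤
        N p * ((C ^ 3 * seqQuot M (2 * p)) ^ p) := by
      calc N p * (seqQuot N p) ^ p ≤ C ^ (2 * p) * M (2 * p) := hl.trans c1
        _ ≤ C ^ (2 * p) * (M p * seqQuot M (2 * p) ^ p) := by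
            exact mul_le_mul_of_nonneg_left hu (by positivity)
        _ ≤ C ^ (2 * p) * ((C ^ p * N p) * seqQuot M (2 * p) ^ p) := by
            exact mul_le_mul_of_nonneg_left
              (mul_le_mul_of_nonneg_right c2 (by positivity)) (by positivity)
        _ = N p * ((C ^ 3 * seqQuot M (2 * p)) ^ p) := by
            rw [mul_pow, ← pow_mul, show 3 * p = 2 * p + p by ring, pow_add]
            ring
    exact le_of_mul_le_mul_left (by linarith [chain]) hNp
  -- Step 2 : genMG of M at 2p
  have hstep2 := hA (2 * p) h2p
  have hidx : a * (2 * p) = 2 * a * p := by ring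
  rw [hidx] at hstep2
  have hexp : ((a : ℝ) * ((2 * p : ℕ) : ℝ))⁻¹ = (((2 * a : ℕ) : ℝ) * (p : ℝ))⁻¹ := by
    push_cast
    ring_nf
  rw [hexp] at hstep2
  -- Step 3 : (M q)^e ≤ C * (N q)^e
  set q : ℕ := 2 * a * p with hq
  set e : ℝ := (((2 * a : ℕ) : ℝ) * (p : ℝ))⁻¹ with he
  have hqpos : 0 < q := by positivity
  have heq : (q : ℝ) * e = 1 := by
    rw [he, hq]
    push_cast
    rw [mul_inv_cancel₀]
    positivity
  have hepos : 0 ≤ e := by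
    rw [he]
    positivity
  have hstep3 : (M q) ^ e ≤ C * (N q) ^ e := by
    have h1 : (M q) ^ e ≤ (C ^ q * N q) ^ e :=
      Real.rpow_le_rpow (hMpos q).le (hMNle q hqpos) hepos
    have h2 : (C ^ q * N q) ^ e = C * (N q) ^ e := by
      rw [Real.mul_rpow (by positivity) (hNpos q).le, ← Real.rpow_natCast C q,
        ← Real.rpow_mul hCpos.le, heq, Real.rpow_one]
    rwa [h2] at h1
  calc seqQuot N p ≤ C ^ 3 * seqQuot M (2 * p) := hstep1
    _ ≤ C ^ 3 * (A * (M q) ^ e) := by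
        exact mul_le_mul_of_nonneg_left hstep2 (by positivity)
    _ ≤ C ^ 3 * (A * (C * (N q) ^ e)) := by
        have hApos : 0 < A := lt_of_lt_of_le one_pos hA1
        exact mul_le_mul_of_nonneg_left
          (mul_le_mul_of_nonneg_left hstep3 hApos.le) (by positivity)
    _ = A * C ^ 4 * (N q) ^ e := by ring
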